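/- arXiv:0708.2292 — 2 statements merged into one kernel-verified Lean document; each statement's English description precedes it below -/
import Mathlib

section
/- Let H be a bounded self-adjoint operator on a complex Hilbert space and let A, B be bounded operators with ‖A‖ ≤ 1 and ‖B‖ ≤ 1. Let L ≥ 1, s > 0, and 0 < m′ < m be reals. Suppose E₀ ∈ ℝ satisfies dist(E₀, σ(H)) > L^{−s} (so in particular E₀ is not in the spectrum σ(H)) and ‖A (H − E₀)^{−1} B‖ ≤ e^{−mL/2}. Set δ = (e^{−m′L/2} − e^{−mL/2}) / (2 L^{2s}). Then for every real E with |E − E₀| ≤ δ, E ∉ σ(H) and ‖A (H − E)^{−1} B‖ ≤ e^{−m′L/2}. -/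
open Metric in
/-- Resolvent bound for a selfadjoint element of a C*-algebra via cfc. -/
lemma resolvent_lemma {𝔄 : Type*} [CStarAlgebra 𝔄] (H : 𝔄) (hH : IsSelfAdjoint H)
    (z : ℂ) (hz : 0 < infDist z (spectrum ℂ H)) :
    IsUnit (H - z • 1) ∧ ‖Ring.inverse (H - z • 1)‖ ≤ (infDist z (spectrum ℂ H))⁻¹ := by
  have hnorm : IsStarNormal H := hH.isStarNormal
  have hzσ : z ∉ spectrum ℂ H := fun h => by
    simpa [infDist_zero_of_mem h] using hz
  have hne : ∀ x ∈ spectrum ℂ H, x - z ≠ 0 := fun x hx =>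
    sub_ne_zero.mpr (ne_of_mem_of_not_mem hx hzσ)
  set f : ℂ → ℂ := fun x => (x - z)⁻¹ with hf
  have hcont : ContinuousOn f (spectrum ℂ H) :=
    ContinuousOn.inv₀ (by fun_prop) hne
  have hXeq : H - z • 1 = cfc (fun x : ℂ => x - z) H := by
    rw [cfc_sub _ _ H (by fun_prop) (by fun_prop), cfc_id' ℂ H, cfc_const z H,
      Algebra.algebraMap_eq_smul_one]
  have h1 : cfc f H * (H - z • 1) = 1 := by
    rw [hXeq, ← cfc_mul f _ H hcont (by fun_prop)]
    rw [show (fun x => f x * (x - z)) = fun x : ℂ => (x - z)⁻¹ * (x - z) from rfl]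
    rw [cfc_congr (g := fun _ : ℂ => 1) fun x hx => inv_mul_cancel₀ (hne x hx)]
    exact cfc_const_one ℂ H
  have h2 : (H - z • 1) * cfc f H = 1 := by
    rw [hXeq, ← cfc_mul _ f H (by fun_prop) hcont]
    rw [cfc_congr (g := fun _ : ℂ => 1) fun x hx => mul_inv_cancel₀ (hne x hx)]
    exact cfc_const_one ℂ H
  have hu : IsUnit (H - z • 1) := ⟨⟨H - z • 1, cfc f H, h2, h1⟩, rfl⟩
  refine ⟨hu, ?_⟩
  have hinv : Ring.inverse (H - z • 1) = cfc f H := by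
    have := Ring.inverse_mul_cancel (H - z • 1) hu
    calc Ring.inverse (H - z • 1)
        = Ring.inverse (H - z • 1) * ((H - z • 1) * cfc f H) := by rw [h2, mul_one]
      _ = (Ring.inverse (H - z • 1) * (H - z • 1)) * cfc f H := by rw [mul_assoc]
      _ = cfc f H := by rw [this, one_mul]
  rw [hinv]
  refine norm_cfc_le (by positivity) fun x hx => ?_
  rw [hf]
  simp only [norm_inv]
  refine inv_anti₀ hz ?_
  calc infDist z (spectrum ℂ H) ≤ dist z x := infDist_le_dist_of_mem hx
    _ = ‖x - z‖ := by rw [dist_comm, dist_eq_norm]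

/-- Energy-perturbation step of the multiscale analysis: if `H` is a bounded
self-adjoint operator on a complex Hilbert space, `‖A‖, ‖B‖ ≤ 1`, `L ≥ 1`, `s > 0`,
`0 < m′ < m`, `dist(E₀, σ(H)) > L^{−s}` and `‖A (H − E₀)⁻¹ B‖ ≤ e^{−mL/2}`, then for
every `E` with `|E − E₀| ≤ δ := (e^{−m′L/2} − e^{−mL/2})/(2L^{2s})` one has
`E ∉ σ(H)` and `‖A (H − E)⁻¹ B‖ ≤ e^{−m′L/2}`. -/
theorem stmt_3 {𝓗 : Type*} [NormedAddCommGroup 𝓗] [InnerProductSpace ℂ 𝓗]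
    [CompleteSpace 𝓗]
    (H A B : 𝓗 →L[ℂ] 𝓗) (hH : IsSelfAdjoint H) (hA : ‖A‖ ≤ 1) (hB : ‖B‖ ≤ 1)
    (L s m m' : ℝ) (hL : 1 ≤ L) (hs : 0 < s) (hm' : 0 < m') (hm'm : m' < m)
    (E₀ : ℝ)
    (hdist : L ^ (-s) < Metric.infDist ((E₀ : ℂ)) (spectrum ℂ H))
    (hE₀ : (E₀ : ℂ) ∉ spectrum ℂ H)
    (hreg : ‖A * Ring.inverse (H - (E₀ : ℂ) • 1) * B‖ ≤ Real.exp (-m * L / 2)) :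
    ∀ E : ℝ, |E - E₀| ≤ (Real.exp (-m' * L / 2) - Real.exp (-m * L / 2)) / (2 * L ^ (2 * s)) →
      (E : ℂ) ∉ spectrum ℂ H ∧
      ‖A * Ring.inverse (H - (E : ℂ) • 1) * B‖ ≤ Real.exp (-m' * L / 2) := by
  intro E hE
  have hLpos : 0 < L := lt_of_lt_of_le one_pos hL
  set T : ℝ := L ^ s with hT
  have hT1 : 1 ≤ T := Real.one_le_rpow hL hs.le
  have hTpos : 0 < T := lt_of_lt_of_le one_pos hT1
  have hinvT : L ^ (-s) = T⁻¹ := Real.rpow_neg hLpos.le s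
  have h2s : L ^ (2 * s) = T ^ 2 := by
    rw [two_mul, Real.rpow_add hLpos, sq]
  set e₁ := Real.exp (-m' * L / 2) with he₁
  set e₂ := Real.exp (-m * L / 2) with he₂
  have hee : e₂ < e₁ := Real.exp_lt_exp.mpr (by nlinarith)
  have he₁1 : e₁ ≤ 1 := Real.exp_le_one_iff.mpr (by nlinarith)
  have he₂pos : 0 < e₂ := Real.exp_pos _
  -- δ bound
  set δ := (e₁ - e₂) / (2 * L ^ (2 * s)) with hδ
  have hδT : δ ≤ T⁻¹ / 2 := by
    rw [hδ, h2s, div_le_div_iff₀ (by positivity) (by norm_num)]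
    have : T ≤ T ^ 2 := by nlinarith
    have hTi : T⁻¹ * T = 1 := inv_mul_cancel₀ hTpos.ne'
    nlinarith [Real.exp_pos (-m * L / 2)]
  -- distances
  have hdistE₀ : T⁻¹ < Metric.infDist ((E₀ : ℂ)) (spectrum ℂ H) := hinvT ▸ hdist
  have hdd : dist ((E₀ : ℂ)) ((E : ℂ)) = |E - E₀| := by
    rw [Complex.dist_eq]
    push_cast
    rw [show (E₀ : ℂ) - E = ((E₀ - E : ℝ) : ℂ) by push_cast; ring, Complex.norm_real,
      Real.norm_eq_abs, abs_sub_comm]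
  have htri : Metric.infDist ((E₀ : ℂ)) (spectrum ℂ H)
      ≤ Metric.infDist ((E : ℂ)) (spectrum ℂ H) + |E - E₀| := by
    rw [← hdd]
    exact Metric.infDist_le_infDist_add_dist
  have hdistE : T⁻¹ / 2 < Metric.infDist ((E : ℂ)) (spectrum ℂ H) := by
    have : |E - E₀| ≤ T⁻¹ / 2 := hE.trans hδT
    linarith
  have hEpos : 0 < Metric.infDist ((E : ℂ)) (spectrum ℂ H) := lt_trans (by positivity) hdistE
  have hE₀pos : 0 < Metric.infDist ((E₀ : ℂ)) (spectrum ℂ H) := lt_trans (by positivity) hdistE₀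
  obtain ⟨hu₀, hn₀⟩ := resolvent_lemma H hH (E₀ : ℂ) hE₀pos
  obtain ⟨hu, hn⟩ := resolvent_lemma H hH (E : ℂ) hEpos
  have hEσ : (E : ℂ) ∉ spectrum ℂ H := fun h => by
    simpa [Metric.infDist_zero_of_mem h] using hEpos
  refine ⟨hEσ, ?_⟩
  -- norm bounds on resolvents
  set R₀ := Ring.inverse (H - (E₀ : ℂ) • 1) with hR₀
  set R := Ring.inverse (H - (E : ℂ) • 1) with hR
  have hn₀T : ‖R₀‖ ≤ T := by
    refine hn₀.trans ?_
    have := inv_anti₀ (by positivity : (0:ℝ) < T⁻¹) hdistE₀.le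
    simpa using this
  have hnT : ‖R‖ ≤ 2 * T := by
    refine hn.trans ?_
    have := inv_anti₀ (by positivity : (0:ℝ) < T⁻¹ / 2) hdistE.le
    calc (Metric.infDist ((E : ℂ)) (spectrum ℂ H))⁻¹ ≤ (T⁻¹ / 2)⁻¹ := this
      _ = 2 * T := by field_simp
  -- resolvent identity
  set X := H - (E : ℂ) • 1 with hX
  set X₀ := H - (E₀ : ℂ) • 1 with hX₀
  have hXX : X₀ - X = ((E : ℂ) - (E₀ : ℂ)) • 1 := by
    rw [hX, hX₀, sub_smul]
    abel
  have hRX : R * X = 1 := Ring.inverse_mul_cancel X hu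
  have hXR₀ : X₀ * R₀ = 1 := Ring.mul_inverse_cancel X₀ hu₀
  have hkey : R = R₀ + ((E : ℂ) - (E₀ : ℂ)) • (R * R₀) := by
    have : R * (X₀ - X) * R₀ = R - R₀ := by
      rw [mul_sub, sub_mul, mul_assoc R X₀ R₀, hXR₀, mul_one, hRX, one_mul]
    rw [hXX] at this
    have h2 : R * (((E : ℂ) - (E₀ : ℂ)) • (1 : 𝓗 →L[ℂ] 𝓗)) * R₀
        = ((E : ℂ) - (E₀ : ℂ)) • (R * R₀) := by
      rw [mul_smul_comm, mul_one, smul_mul_assoc]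
    rw [h2] at this
    linear_combination (norm := module) -this
  have hiden : A * R * B = A * R₀ * B + ((E : ℂ) - (E₀ : ℂ)) • (A * (R * R₀) * B) := by
    calc A * R * B = A * (R₀ + ((E : ℂ) - (E₀ : ℂ)) • (R * R₀)) * B := by rw [← hkey]
      _ = A * R₀ * B + ((E : ℂ) - (E₀ : ℂ)) • (A * (R * R₀) * B) := by
          simp only [mul_add, add_mul, mul_smul_comm, smul_mul_assoc]
  -- final estimate
  have hcnorm : ‖((E : ℂ) - (E₀ : ℂ))‖ = |E - E₀| := by
    rw [← Complex.ofReal_sub, Complex.norm_real, Real.norm_eq_abs]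
  have hδ0 : 0 ≤ δ := div_nonneg (by linarith) (by positivity)
  have hmid : ‖A * (R * R₀) * B‖ ≤ 2 * T ^ 2 := by
    have h1 : ‖A * (R * R₀) * B‖ ≤ ‖A‖ * (‖R‖ * ‖R₀‖) * ‖B‖ :=
      (norm_mul_le _ _).trans (mul_le_mul_of_nonneg_right ((norm_mul_le _ _).trans
        (mul_le_mul_of_nonneg_left (norm_mul_le _ _) (norm_nonneg _))) (norm_nonneg _))
    have h2 : ‖R‖ * ‖R₀‖ ≤ 2 * T * T :=
      mul_le_mul hnT hn₀T (norm_nonneg _) (by positivity)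
    have h3 : ‖A‖ * (‖R‖ * ‖R₀‖) ≤ 1 * (2 * T * T) :=
      mul_le_mul hA h2 (by positivity) one_pos.le
    have h4 : ‖A‖ * (‖R‖ * ‖R₀‖) * ‖B‖ ≤ 1 * (2 * T * T) * 1 :=
      mul_le_mul h3 hB (norm_nonneg _) (by positivity)
    have h5 : (1:ℝ) * (2 * T * T) * 1 = 2 * T ^ 2 := by ring
    linarith
  calc ‖A * R * B‖ = ‖A * R₀ * B + ((E : ℂ) - (E₀ : ℂ)) • (A * (R * R₀) * B)‖ := by
        rw [hiden]
    _ ≤ ‖A * R₀ * B‖ + ‖((E : ℂ) - (E₀ : ℂ)) • (A * (R * R₀) * B)‖ := norm_add_le _ _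
    _ = ‖A * R₀ * B‖ + |E - E₀| * ‖A * (R * R₀) * B‖ := by rw [norm_smul, hcnorm]
    _ ≤ e₂ + δ * (2 * T ^ 2) :=
        add_le_add hreg (mul_le_mul hE hmid (norm_nonneg _) hδ0)
    _ ≤ e₁ := by
        rw [hδ, h2s, div_mul_cancel₀]
        · linarith
        · positivity
end

section
/- Let d ≥ 1 be an integer and let γ > 0, θ′ > 0, s > 0, and α > 1 be reals. Then there exist c > 0 and ℓ₀ ≥ 3 (depending only on d, γ, θ′, s, α) such that for all reals ℓ ≥ ℓ₀, all reals L with ℓ^α/2 ≤ L ≤ ℓ^α, and all reals m ≥ 2θ′ (log ℓ)/ℓ, the real number M := m·(1 − 3ℓ/L) − (2/L)·( s·log L + d·log(L/ℓ + 2) + (L/ℓ − 3)·log(3^d γ) ) satisfies both M ≥ m·(1 − c/log ℓ) and M ≥ 2θ′·(log L)/L. -/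
set_option maxHeartbeats 1000000

open Filter Real


/-- Mass decay estimate (bigboxest3) of the multiscale analysis: there exist
`c > 0` and `ℓ₀ ≥ 3` (depending only on `d, γ, θ′, s, α`) such that for `ℓ ≥ ℓ₀`,
`ℓ^α/2 ≤ L ≤ ℓ^α` and `m ≥ 2θ′ log ℓ/ℓ`, the number
`M := m(1 − 3ℓ/L) − (2/L)(s log L + d log(L/ℓ+2) + (L/ℓ−3) log(3^d γ))`
satisfies `M ≥ m(1 − c/log ℓ)` and `M ≥ 2θ′ log L/L`. -/
theorem stmt_10 (d : ℕ) (hd : 1 ≤ d) (γ θ' s α : ℝ) (hγ : 0 < γ) (hθ' : 0 < θ')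
    (hs : 0 < s) (hα : 1 < α) :
    ∃ c : ℝ, 0 < c ∧ ∃ ℓ₀ : ℝ, 3 ≤ ℓ₀ ∧
      ∀ ℓ : ℝ, ℓ₀ ≤ ℓ → ∀ L : ℝ, ℓ ^ α / 2 ≤ L → L ≤ ℓ ^ α →
        ∀ m : ℝ, 2 * θ' * Real.log ℓ / ℓ ≤ m →
          m * (1 - c / Real.log ℓ) ≤
              m * (1 - 3 * ℓ / L) -
                (2 / L) * (s * Real.log L + d * Real.log (L / ℓ + 2) +
                  (L / ℓ - 3) * Real.log ((3 : ℝ) ^ d * γ)) ∧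
          2 * θ' * Real.log L / L ≤
              m * (1 - 3 * ℓ / L) -
                (2 / L) * (s * Real.log L + d * Real.log (L / ℓ + 2) +
                  (L / ℓ - 3) * Real.log ((3 : ℝ) ^ d * γ)) := by
  obtain ⟨K, hKdef⟩ : ∃ x : ℝ, x = |Real.log ((3 : ℝ) ^ d * γ)| := ⟨_, rfl⟩
  have hK0 : 0 ≤ K := hKdef ▸ abs_nonneg _
  obtain ⟨c, hcdef⟩ : ∃ x : ℝ, x = (2 * K + 1) / θ' + 1 := ⟨_, rfl⟩
  have hc0 : 0 < c := by rw [hcdef]; positivity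
  have hθc : 2 * K + 1 ≤ θ' * c := by
    rw [hcdef, mul_add, mul_div_cancel₀ _ hθ'.ne']
    nlinarith
  have hα1 : (0:ℝ) < α - 1 := by linarith
  have hα0 : (0:ℝ) < α := by linarith
  have hd1 : (1:ℝ) ≤ (d:ℝ) := by exact_mod_cast hd
  obtain ⟨ε, hεdef⟩ : ∃ x : ℝ, x = min (c / 12) (1 / (4 * (s + d) * α)) := ⟨_, rfl⟩
  have hε0 : 0 < ε := by
    rw [hεdef]
    apply lt_min (by positivity) (by positivity)
  have hε1 : 12 * ε ≤ c := by
    have := hεdef ▸ min_le_left (c / 12) (1 / (4 * (s + d) * α))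
    linarith
  have hε2 : ε ≤ 1 / (4 * (s + d) * α) := hεdef ▸ min_le_right _ _
  have hLO : ∀ᶠ x : ℝ in atTop, ‖Real.log x‖ ≤ ε * ‖x ^ (α - 1)‖ :=
    (isLittleO_log_rpow_atTop hα1).def hε0
  have hA : ∀ᶠ x : ℝ in atTop, 8 * α + 6 ≤ x ^ (α - 1) :=
    (tendsto_rpow_atTop hα1).eventually_ge_atTop _
  have hD : ∀ᶠ x : ℝ in atTop, 2 * c ≤ Real.log x :=
    Real.tendsto_log_atTop.eventually_ge_atTop _
  have h3 : ∀ᶠ x : ℝ in atTop, (3:ℝ) ≤ x := eventually_ge_atTop 3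
  obtain ⟨a, ha⟩ := (((hLO.and hA).and hD).and h3).exists_forall_of_atTop
  refine ⟨c, hc0, max a 3, le_max_right _ _, ?_⟩
  intro ℓ hℓ L hL1 hL2 m hm
  obtain ⟨⟨⟨hlo, hA'⟩, hD'⟩, h3'⟩ := ha ℓ (le_trans (le_max_left a 3) hℓ)
  obtain ⟨P, hPdef⟩ : ∃ x : ℝ, x = ℓ ^ (α - 1) := ⟨_, rfl⟩
  rw [← hPdef] at hA' hlo
  have hℓ0 : (0:ℝ) < ℓ := by linarith
  have hP0 : 0 < P := hPdef ▸ Real.rpow_pos_of_pos hℓ0 _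
  have hP6 : (6:ℝ) ≤ P := by linarith
  have hPα : (8:ℝ) * α ≤ P := by linarith
  have hpow : ℓ ^ α = ℓ * P := by
    rw [hPdef, ← Real.rpow_one_add' hℓ0.le (by linarith)]
    ring_nf
  have hlogℓ0 : 0 < Real.log ℓ := by linarith
  have hεP : Real.log ℓ ≤ ε * P := by
    rw [Real.norm_eq_abs, Real.norm_eq_abs, abs_of_pos hlogℓ0, abs_of_pos hP0] at hlo
    exact hlo
  have hB : 12 * Real.log ℓ ≤ c * P := by
    have h2 : 12 * ε * P ≤ c * P := mul_le_mul_of_nonneg_right hε1 hP0.le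
    nlinarith
  have hC : 4 * (s + d) * α * Real.log ℓ ≤ P := by
    have h2 : 0 < 4 * (s + d) * α := by positivity
    have h3 : ε * P ≤ 1 / (4 * (s + d) * α) * P := mul_le_mul_of_nonneg_right hε2 hP0.le
    have h4 : Real.log ℓ ≤ 1 / (4 * (s + d) * α) * P := le_trans hεP h3
    have h5 := mul_le_mul_of_nonneg_left h4 h2.le
    calc 4 * (s + d) * α * Real.log ℓ
        ≤ 4 * (s + d) * α * (1 / (4 * (s + d) * α) * P) := h5
      _ = P := by field_simp
  have hLlow : ℓ * P / 2 ≤ L := by rw [← hpow]; exact hL1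
  have hL0 : 0 < L := lt_of_lt_of_le (by positivity) hLlow
  have hℓP6 : 6 * ℓ ≤ ℓ * P := by nlinarith
  have hL3ℓ : 3 * ℓ ≤ L := by linarith
  have hL9 : (9:ℝ) ≤ L := by nlinarith
  have hm0 : 0 ≤ m := le_trans (by positivity) hm
  have hlogL : Real.log L ≤ α * Real.log ℓ := by
    calc Real.log L ≤ Real.log (ℓ ^ α) := Real.log_le_log hL0 hL2
      _ = α * Real.log ℓ := Real.log_rpow hℓ0 _
  have hlogL0 : 0 ≤ Real.log L := Real.log_nonneg (by linarith)
  have hLℓP : L ≤ ℓ * P := by rw [← hpow]; exact hL2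
  have hlog2 : Real.log (L / ℓ + 2) ≤ α * Real.log ℓ := by
    have h1 : L / ℓ ≤ P := by rw [div_le_iff₀ hℓ0]; nlinarith
    have h2 : L / ℓ + 2 ≤ ℓ ^ α := by
      rw [hpow]
      have h6 : 2 * 6 ≤ (ℓ - 1) * P :=
        mul_le_mul (by linarith) hP6 (by norm_num) (by linarith)
      nlinarith
    calc Real.log (L / ℓ + 2) ≤ Real.log (ℓ ^ α) := Real.log_le_log (by positivity) h2
      _ = α * Real.log ℓ := Real.log_rpow hℓ0 _
  have hLℓ3 : (0:ℝ) ≤ L / ℓ - 3 := by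
    rw [sub_nonneg, le_div_iff₀ hℓ0]; linarith
  have hT : (L / ℓ - 3) * Real.log ((3:ℝ) ^ d * γ) ≤ L / ℓ * K := by
    have h1 : Real.log ((3:ℝ) ^ d * γ) ≤ K := hKdef ▸ le_abs_self _
    have h2 : (L / ℓ - 3) * Real.log ((3:ℝ) ^ d * γ) ≤ (L / ℓ - 3) * K :=
      mul_le_mul_of_nonneg_left h1 hLℓ3
    nlinarith
  have hS : s * Real.log L + d * Real.log (L / ℓ + 2) +
      (L / ℓ - 3) * Real.log ((3 : ℝ) ^ d * γ) ≤ (s + d) * α * Real.log ℓ + L / ℓ * K := by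
    have h1 : s * Real.log L ≤ s * (α * Real.log ℓ) := mul_le_mul_of_nonneg_left hlogL hs.le
    have h2 : (d:ℝ) * Real.log (L / ℓ + 2) ≤ d * (α * Real.log ℓ) :=
      mul_le_mul_of_nonneg_left hlog2 (by positivity)
    nlinarith
  have hX : (2 / L) * (s * Real.log L + d * Real.log (L / ℓ + 2) +
      (L / ℓ - 3) * Real.log ((3 : ℝ) ^ d * γ)) ≤ θ' * c / ℓ := by
    have h1 : (2 / L) * (s * Real.log L + d * Real.log (L / ℓ + 2) +
        (L / ℓ - 3) * Real.log ((3 : ℝ) ^ d * γ))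
        ≤ (2 / L) * ((s + d) * α * Real.log ℓ + L / ℓ * K) :=
      mul_le_mul_of_nonneg_left hS (by positivity)
    have h2 : (2 / L) * (L / ℓ * K) = 2 * K / ℓ := by field_simp
    have h3 : (2 / L) * ((s + d) * α * Real.log ℓ) ≤ 1 / ℓ := by
      rw [div_mul_eq_mul_div, div_le_div_iff₀ hL0 hℓ0]
      have h5 := mul_le_mul_of_nonneg_right hC hℓ0.le
      nlinarith
    have h4 : (2 * K + 1) / ℓ ≤ θ' * c / ℓ := (div_le_div_iff_of_pos_right hℓ0).mpr hθc
    calc (2 / L) * (s * Real.log L + d * Real.log (L / ℓ + 2) +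
        (L / ℓ - 3) * Real.log ((3 : ℝ) ^ d * γ))
        ≤ (2 / L) * ((s + d) * α * Real.log ℓ) + (2 / L) * (L / ℓ * K) := by
          rw [← mul_add]; exact h1
      _ ≤ 1 / ℓ + 2 * K / ℓ := by rw [h2]; linarith
      _ = (2 * K + 1) / ℓ := by ring
      _ ≤ θ' * c / ℓ := h4
  have hstep : 3 * ℓ / L ≤ c / (2 * Real.log ℓ) := by
    have h1 : 3 * ℓ / L ≤ 6 / P := by
      rw [div_le_div_iff₀ hL0 hP0]; linarith
    have h2 : 6 / P ≤ c / (2 * Real.log ℓ) := by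
      have h2l : (0:ℝ) < 2 * Real.log ℓ := by positivity
      rw [div_le_div_iff₀ hP0 h2l]; linarith
    linarith
  have hmhalf : θ' * c / ℓ ≤ m * (c / (2 * Real.log ℓ)) := by
    have h1 : (2 * θ' * Real.log ℓ / ℓ) * (c / (2 * Real.log ℓ)) = θ' * c / ℓ := by
      field_simp
    rw [← h1]
    exact mul_le_mul_of_nonneg_right hm (by positivity)
  have goal1 : m * (1 - c / Real.log ℓ) ≤
      m * (1 - 3 * ℓ / L) - (2 / L) * (s * Real.log L + d * Real.log (L / ℓ + 2) +
        (L / ℓ - 3) * Real.log ((3 : ℝ) ^ d * γ)) := by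
    have h1 : m * (3 * ℓ / L) ≤ m * (c / (2 * Real.log ℓ)) :=
      mul_le_mul_of_nonneg_left hstep hm0
    have h2 : m * (1 - c / Real.log ℓ) = m - 2 * (m * (c / (2 * Real.log ℓ))) := by
      field_simp
    have h3 : m * (1 - 3 * ℓ / L) = m - m * (3 * ℓ / L) := by ring
    linarith
  refine ⟨goal1, ?_⟩
  have hhalf : c / Real.log ℓ ≤ 1 / 2 := by
    rw [div_le_div_iff₀ hlogℓ0 (by norm_num)]; linarith
  have e1 : 2 * θ' * Real.log L / L ≤ 2 * θ' * (α * Real.log ℓ) / (ℓ * P / 2) := by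
    have hac : 2 * θ' * Real.log L ≤ 2 * θ' * (α * Real.log ℓ) :=
      mul_le_mul_of_nonneg_left hlogL (by positivity)
    exact div_le_div₀ (by positivity) hac (by positivity) hLlow
  have e2 : 2 * θ' * (α * Real.log ℓ) / (ℓ * P / 2) = 4 * θ' * α * Real.log ℓ / (ℓ * P) := by
    field_simp; ring
  have e3 : 4 * θ' * α * Real.log ℓ / (ℓ * P) ≤ 2 * θ' * (Real.log ℓ - c) / ℓ := by
    rw [div_le_div_iff₀ (by positivity) hℓ0]
    have t1 : 0 ≤ (Real.log ℓ - 2 * c) * θ' * (ℓ * P) :=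
      mul_nonneg (mul_nonneg (by linarith) hθ'.le) (by positivity)
    have t2 : 0 ≤ θ' * Real.log ℓ * ℓ * (P - 8 * α) :=
      mul_nonneg (by positivity) (by linarith)
    have t3 : 0 ≤ θ' * α * Real.log ℓ * ℓ := by positivity
    linarith [t1, t2, t3]
  have e4 : 2 * θ' * (Real.log ℓ - c) / ℓ =
      (2 * θ' * Real.log ℓ / ℓ) * (1 - c / Real.log ℓ) := by
    field_simp
  have e5 : (2 * θ' * Real.log ℓ / ℓ) * (1 - c / Real.log ℓ) ≤ m * (1 - c / Real.log ℓ) :=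
    mul_le_mul_of_nonneg_right hm (by linarith)
  calc 2 * θ' * Real.log L / L ≤ 4 * θ' * α * Real.log ℓ / (ℓ * P) := by rw [← e2]; exact e1
    _ ≤ 2 * θ' * (Real.log ℓ - c) / ℓ := e3
    _ = (2 * θ' * Real.log ℓ / ℓ) * (1 - c / Real.log ℓ) := e4
    _ ≤ m * (1 - c / Real.log ℓ) := e5
    _ ≤ m * (1 - 3 * ℓ / L) - (2 / L) * (s * Real.log L + d * Real.log (L / ℓ + 2) +
          (L / ℓ - 3) * Real.log ((3 : ℝ) ^ d * γ)) := goal1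
end
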